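/- Let $n$ discrete random variables $X_i \sim \mathrm{Unif}\{0,1,\ldots,\ell_i\}$ (uniform on integers) with $\ell_i \in \mathbb{N}$. If $X_1,\ldots,X_n$ are jointly mixable, then $\sum_{i=1}^n \ell_i$ is even and $2\max_i \ell_i \le \sum_{i=1}^n \ell_i$. -/

import Mathlib

open MeasureTheory

/-- The uniform distribution on `{0, 1, ..., ℓ}` as a measure on `ℕ`. -/
noncomputable def discUnif (ℓ : ℕ) : Measure ℕ :=
  (PMF.uniformOfFinset (Finset.range (ℓ + 1)) ⟨0, by simp⟩).toMeasure

theorem stmt_11 (n : ℕ) (ℓ : Fin n → ℕ)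
    (π : Measure (Fin n → ℕ)) [IsProbabilityMeasure π]
    (hmarg : ∀ i, π.map (fun x => x i) = discUnif (ℓ i))
    (hmix : ∀ᵐ x ∂π, (∑ i, (x i : ℝ)) = (∑ i, (ℓ i : ℝ)) / 2) :
    Even (∑ i, ℓ i) ∧ ∀ i, 2 * ℓ i ≤ ∑ j, ℓ j := by
  have key : ∀ (A : Set (Fin n → ℕ)), π A ≠ 0 →
      ∃ x ∈ A, (∑ i, (x i : ℝ)) = (∑ i, (ℓ i : ℝ)) / 2 := by
    intro A hA
    have h0 : π {x | ¬ (∑ i, (x i : ℝ)) = (∑ i, (ℓ i : ℝ)) / 2} = 0 := hmix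
    by_contra h
    push_neg at h
    have hsub : A ⊆ {x | ¬ (∑ i, (x i : ℝ)) = (∑ i, (ℓ i : ℝ)) / 2} :=
      fun x hx => h x hx
    exact hA (le_antisymm ((measure_mono hsub).trans h0.le) zero_le)
  constructor
  · obtain ⟨x, -, hx⟩ := key Set.univ (by simp)
    have h1 : (↑(∑ i, ℓ i) : ℝ) = ↑(2 * ∑ i, x i) := by push_cast; linarith
    have h2 : ∑ i, ℓ i = 2 * ∑ i, x i := Nat.cast_injective h1
    exact ⟨∑ i, x i, by omega⟩
  · intro i
    have hmeas : π {x : Fin n → ℕ | x i = ℓ i} ≠ 0 := by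
      have hm : π.map (fun x => x i) {ℓ i} = discUnif (ℓ i) {ℓ i} := by
        rw [hmarg i]
      rw [Measure.map_apply (measurable_pi_apply i) (measurableSet_singleton _)] at hm
      have hd : discUnif (ℓ i) {ℓ i} ≠ 0 := by
        rw [discUnif, PMF.toMeasure_apply_singleton _ _ (measurableSet_singleton _)]
        exact (PMF.mem_support_iff _ _).mp ((PMF.mem_support_uniformOfFinset_iff _ _).mpr (by simp))
      intro hc
      apply hd
      rw [← hm, ← hc]
      rfl
    obtain ⟨x, hxA, hx⟩ := key _ hmeas
    have hxi : x i = ℓ i := hxA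
    have h1 : (ℓ i : ℝ) ≤ ∑ j, (x j : ℝ) := by
      rw [← hxi]
      exact Finset.single_le_sum (f := fun j => (x j : ℝ)) (fun j _ => by positivity) (Finset.mem_univ i)
    have h2 : ((2 * ℓ i : ℕ) : ℝ) ≤ ((∑ j, ℓ j : ℕ) : ℝ) := by push_cast; linarith
    exact_mod_cast h2
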